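/- Let L be an invertible matrix differential operator with causal Green's matrix G_L (the unique causal matrix distribution with L{G_L} = I·δ). Then the time-reversed transpose G_L^{⊤,∨}(·) = G_L^⊤(−·) is an anti-causal Green's matrix of the adjoint operator L*, i.e., L*{G_L^{⊤,∨}} = I·δ, and G_L^{⊤,∨} is supported in (−∞, 0]. -/

import Mathlib

open MeasureTheory SchwartzMap Polynomial

noncomputable section

/-- Tempered distributions on `ℝ`. -/
abbrev TD : Type := SchwartzMap ℝ ℝ →L[ℝ] ℝ

/-- Distributional derivative. -/
def Dop : Module.End ℝ TD where
  toFun T := -(T.comp (SchwartzMap.derivCLM ℝ ℝ))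
  map_add' T S := by ext φ; simp [neg_add]; ring
  map_smul' c T := by ext φ; simp

/-- Action of an ordinary differential operator (a polynomial in `D`) on a distribution. -/
def odo (p : Polynomial ℝ) : Module.End ℝ TD := Polynomial.aeval Dop p

/-- Dirac delta distribution at `0`. -/
def diracTD : TD :=
  (BoundedContinuousFunction.evalCLM ℝ (0 : ℝ)).comp (toBoundedContinuousFunctionCLM ℝ ℝ ℝ)

/-- Action of a matrix differential operator on a vector-valued distribution. -/
def mdoLM {D : ℕ} (L : Matrix (Fin D) (Fin D) (Polynomial ℝ)) :
    (Fin D → TD) →ₗ[ℝ] (Fin D → TD) where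
  toFun f r := ∑ c, odo (L r c) (f c)
  map_add' f g := by funext r; simp [Finset.sum_add_distrib]
  map_smul' c f := by funext r; simp [Finset.smul_sum]

/-- Action of a matrix differential operator on a matrix-valued distribution. -/
def mdoMat {D : ℕ} (L : Matrix (Fin D) (Fin D) (Polynomial ℝ))
    (G : Matrix (Fin D) (Fin D) TD) : Matrix (Fin D) (Fin D) TD :=
  Matrix.of fun r c => ∑ d, odo (L r d) (G d c)

/-- The identity matrix times the Dirac delta. -/
def idDelta (D : ℕ) : Matrix (Fin D) (Fin D) TD :=
  Matrix.of fun r c => if r = c then diracTD else 0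

/-- A distribution is causal if it vanishes on test functions supported in `(-∞, 0)`. -/
def IsCausalTD (T : TD) : Prop := ∀ φ : SchwartzMap ℝ ℝ, tsupport ⇑φ ⊆ Set.Iio 0 → T φ = 0

/-- A distribution is anti-causal if it vanishes on test functions supported in `(0, ∞)`. -/
def IsAntiCausalTD (T : TD) : Prop := ∀ φ : SchwartzMap ℝ ℝ, tsupport ⇑φ ⊆ Set.Ioi 0 → T φ = 0

/-- Time reversal of a distribution. -/
def revTD (T : TD) : TD :=
  T.comp (SchwartzMap.compCLMOfContinuousLinearEquiv ℝ (ContinuousLinearEquiv.neg ℝ))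

/-- Adjoint of a matrix differential operator: transpose and `D ↦ -D`. -/
def mdoAdj {D : ℕ} (L : Matrix (Fin D) (Fin D) (Polynomial ℝ)) :
    Matrix (Fin D) (Fin D) (Polynomial ℝ) :=
  Matrix.of fun r c => (L c r).comp (-Polynomial.X)
/-- The time-reversed transpose of a matrix-valued distribution. -/
def revTranspose {D : ℕ} (G : Matrix (Fin D) (Fin D) TD) : Matrix (Fin D) (Fin D) TD :=
  Matrix.of fun r c => revTD (G c r)

namespace AGM


lemma norm_exp_mul_ofReal (a : ℂ) (s : ℝ) : ‖Complex.exp (a * s)‖ = Real.exp (a.re * s) := by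
  rw [Complex.norm_exp]
  norm_num [Complex.mul_re]

/-- Main analytic construction: solving `φ' = ψ - a φ` within Schwartz space,
for `Re a ≥ 0` (with a moment condition when `Re a = 0`). -/
lemma exists_schwartz_sol (a : ℂ) (ha : 0 ≤ a.re) (ψ : SchwartzMap ℝ ℂ)
    (hmom : a.re = 0 → ∫ s : ℝ, Complex.exp (a * s) * ψ s = 0) :
    ∃ φ : SchwartzMap ℝ ℂ, ∀ t, deriv (⇑φ) t = ψ t - a * φ t := by
  set g : ℝ → ℂ := fun s => Complex.exp (a * s) * ψ s with hg
  have hgc : Continuous g := by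
    fun_prop
  have hgnorm : ∀ s, ‖g s‖ = Real.exp (a.re * s) * ‖ψ s‖ := by
    intro s; rw [hg, norm_mul, norm_exp_mul_ofReal]
  have hInt : ∀ t : ℝ, IntegrableOn g (Set.Iic t) := by
    intro t
    refine Integrable.mono ((ψ.integrable (μ := volume)).norm.const_mul
      (Real.exp (a.re * t))).restrict hgc.aestronglyMeasurable.restrict ?_
    refine (ae_restrict_iff' measurableSet_Iic).2 (Filter.Eventually.of_forall fun s hs => ?_)
    rw [hgnorm s, norm_mul, norm_norm]
    have h1 : Real.exp (a.re * s) ≤ Real.exp (a.re * t) :=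
      Real.exp_le_exp.2 (mul_le_mul_of_nonneg_left hs ha)
    have h2 : Real.exp (a.re * t) ≤ ‖Real.exp (a.re * t)‖ := le_abs_self _
    exact mul_le_mul (h2.trans' h1) le_rfl (norm_nonneg _) (norm_nonneg _)
  set F : ℝ → ℂ := fun t => ∫ s in Set.Iic t, g s with hF
  have hFeq : F = fun t => F 0 + ∫ s in (0:ℝ)..t, g s := by
    funext t
    rw [← intervalIntegral.integral_Iic_sub_Iic (hInt 0) (hInt t)]
    simp [hF]
  have hFd : ∀ t, HasDerivAt F (g t) t := by
    intro t
    rw [hFeq]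
    exact (intervalIntegral.integral_hasDerivAt_right (hgc.intervalIntegrable _ _)
      hgc.stronglyMeasurable.stronglyMeasurableAtFilter hgc.continuousAt).const_add _
  set φf : ℝ → ℂ := fun t => Complex.exp (-a * t) * F t with hφf
  have hexp1 : ∀ t : ℝ, Complex.exp (-a * t) * Complex.exp (a * t) = 1 := by
    intro t; rw [← Complex.exp_add]; ring_nf; exact Complex.exp_zero
  have hed : ∀ t : ℝ, HasDerivAt (fun t : ℝ => Complex.exp (-a * t))
      (-a * Complex.exp (-a * t)) t := by
    intro t
    have h1 : HasDerivAt (fun t : ℝ => ((t : ℂ))) 1 t := Complex.ofRealCLM.hasDerivAt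
    have h2 := (h1.const_mul (-a)).cexp
    simpa [mul_comm] using h2
  have hφd : ∀ t, HasDerivAt φf (ψ t - a * φf t) t := by
    intro t
    have h := (hed t).mul (hFd t)
    have heq : -a * Complex.exp (-a * t) * F t + Complex.exp (-a * t) * g t
        = ψ t - a * φf t := by
      rw [hg, hφf]
      have := hexp1 t
      simp only []
      linear_combination (ψ t) * this
    rw [heq] at h
    exact h
  -- order-zero decay
  have decay0 : ∀ k : ℕ, ∃ C : ℝ, ∀ t, ‖t‖ ^ k * ‖φf t‖ ≤ C := by
    intro k
    have hMkInt : Integrable (fun s : ℝ => ‖s‖ ^ k * ‖ψ s‖) := ψ.integrable_pow_mul volume k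
    set Mk : ℝ := ∫ s : ℝ, ‖s‖ ^ k * ‖ψ s‖ with hMk
    have hψInt : Integrable (fun s : ℝ => ‖ψ s‖) := (ψ.integrable (μ := volume)).norm
    set M0 : ℝ := ∫ s : ℝ, ‖ψ s‖ with hM0
    have hφnorm : ∀ t : ℝ, ‖φf t‖ = Real.exp (-(a.re * t)) * ‖F t‖ := by
      intro t
      rw [hφf]
      simp only []
      rw [norm_mul]
      congr 1
      have := norm_exp_mul_ofReal (-a) t
      simpa using this
    -- bound for t ≤ 0
    have hneg : ∀ t : ℝ, t ≤ 0 → ‖t‖ ^ k * ‖φf t‖ ≤ Mk := by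
      intro t ht
      have h1 : ‖F t‖ ≤ ∫ s in Set.Iic t, ‖g s‖ := norm_integral_le_integral_norm _
      have h2 : ‖t‖ ^ k * ‖φf t‖
          ≤ ∫ s in Set.Iic t, ‖t‖ ^ k * Real.exp (-(a.re * t)) * ‖g s‖ := by
        rw [hφnorm t, integral_const_mul]
        calc ‖t‖ ^ k * (Real.exp (-(a.re * t)) * ‖F t‖)
            ≤ ‖t‖ ^ k * (Real.exp (-(a.re * t)) * ∫ s in Set.Iic t, ‖g s‖) := by
              gcongr
          _ = ‖t‖ ^ k * Real.exp (-(a.re * t)) * ∫ s in Set.Iic t, ‖g s‖ := by ring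
      refine h2.trans ?_
      have h3 : ∫ s in Set.Iic t, ‖t‖ ^ k * Real.exp (-(a.re * t)) * ‖g s‖
          ≤ ∫ s in Set.Iic t, ‖s‖ ^ k * ‖ψ s‖ := by
        refine setIntegral_mono_on (((hInt t).norm).const_mul _) hMkInt.restrict
          measurableSet_Iic ?_
        intro s hs
        simp only [Set.mem_Iic] at hs
        rw [hgnorm s]
        have hts : ‖t‖ ≤ ‖s‖ := by
          rw [Real.norm_eq_abs, Real.norm_eq_abs, abs_of_nonpos ht,
            abs_of_nonpos (hs.trans ht)]
          linarith
        have hexple : Real.exp (-(a.re * t)) * Real.exp (a.re * s) ≤ 1 := by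
          rw [← Real.exp_add]
          refine Real.exp_le_one_iff.2 ?_
          have : a.re * s ≤ a.re * t := mul_le_mul_of_nonneg_left hs ha
          linarith
        calc ‖t‖ ^ k * Real.exp (-(a.re * t)) * (Real.exp (a.re * s) * ‖ψ s‖)
            = (Real.exp (-(a.re * t)) * Real.exp (a.re * s)) * (‖t‖ ^ k * ‖ψ s‖) := by ring
          _ ≤ 1 * (‖s‖ ^ k * ‖ψ s‖) := by
              refine mul_le_mul hexple ?_ (by positivity) one_pos.le
              exact mul_le_mul_of_nonneg_right (pow_le_pow_left₀ (norm_nonneg _) hts k)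
                (norm_nonneg _)
          _ = ‖s‖ ^ k * ‖ψ s‖ := one_mul _
      refine h3.trans ?_
      exact setIntegral_le_integral hMkInt (Filter.Eventually.of_forall fun s => by positivity)
    rcases eq_or_lt_of_le ha with hre | hre
    · -- purely imaginary case: use moment condition
      have hre : a.re = 0 := hre.symm
      have hgInt : Integrable g := by
        refine Integrable.mono hψInt hgc.aestronglyMeasurable
          (Filter.Eventually.of_forall fun s => ?_)
        rw [hgnorm s, hre, norm_norm]
        simp
      have hFt : ∀ t, F t = - ∫ s in Set.Ioi t, g s := by
        intro t
        have h := intervalIntegral.integral_Iic_add_Ioi (μ := volume) (f := g) (b := t)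
          (hInt t) hgInt.integrableOn
        rw [hmom hre] at h
        exact eq_neg_of_add_eq_zero_left h
      refine ⟨Mk, fun t => ?_⟩
      rcases le_or_gt t 0 with ht | ht
      · exact hneg t ht
      · -- t > 0, a.re = 0
        have h1 : ‖φf t‖ ≤ ∫ s in Set.Ioi t, ‖g s‖ := by
          rw [hφnorm t, hre, hFt t]
          simpa using norm_integral_le_integral_norm (μ := volume.restrict (Set.Ioi t)) g
        have h2 : ‖t‖ ^ k * ‖φf t‖ ≤ ∫ s in Set.Ioi t, ‖t‖ ^ k * ‖g s‖ := by
          rw [integral_const_mul]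
          exact mul_le_mul_of_nonneg_left h1 (by positivity)
        refine h2.trans ?_
        have h3 : ∫ s in Set.Ioi t, ‖t‖ ^ k * ‖g s‖ ≤ ∫ s in Set.Ioi t, ‖s‖ ^ k * ‖ψ s‖ := by
          refine setIntegral_mono_on
            ((hgInt.norm.const_mul _).restrict) hMkInt.restrict measurableSet_Ioi ?_
          intro s hs
          simp only [Set.mem_Ioi] at hs
          rw [hgnorm s, hre]
          have hts : ‖t‖ ≤ ‖s‖ := by
            rw [Real.norm_eq_abs, Real.norm_eq_abs, abs_of_pos ht, abs_of_pos (ht.trans hs)]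
            exact hs.le
          simpa using mul_le_mul_of_nonneg_right (pow_le_pow_left₀ (norm_nonneg _) hts k)
            (norm_nonneg (ψ s))
        refine h3.trans ?_
        exact setIntegral_le_integral hMkInt (Filter.Eventually.of_forall fun s => by positivity)
    · -- a.re > 0 case
      set C2 : ℝ := 2 ^ k * ((k.factorial / a.re ^ k) * M0 + Mk) with hC2
      refine ⟨max Mk C2, fun t => ?_⟩
      rcases le_or_gt t 0 with ht | ht
      · exact (hneg t ht).trans (le_max_left _ _)
      · refine le_trans ?_ (le_max_right _ _)
        have h2 : ‖t‖ ^ k * ‖φf t‖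
            ≤ ∫ s in Set.Iic t, ‖t‖ ^ k * Real.exp (-(a.re * t)) * ‖g s‖ := by
          rw [hφnorm t, integral_const_mul]
          calc ‖t‖ ^ k * (Real.exp (-(a.re * t)) * ‖F t‖)
              ≤ ‖t‖ ^ k * (Real.exp (-(a.re * t)) * ∫ s in Set.Iic t, ‖g s‖) := by
                gcongr
                exact norm_integral_le_integral_norm _
            _ = ‖t‖ ^ k * Real.exp (-(a.re * t)) * ∫ s in Set.Iic t, ‖g s‖ := by ring
        refine h2.trans ?_
        have hdomInt : Integrable
            (fun s : ℝ => 2 ^ k * ((k.factorial / a.re ^ k) * ‖ψ s‖ + ‖s‖ ^ k * ‖ψ s‖)) :=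
          ((hψInt.const_mul _).add hMkInt).const_mul _
        have h3 : ∫ s in Set.Iic t, ‖t‖ ^ k * Real.exp (-(a.re * t)) * ‖g s‖
            ≤ ∫ s in Set.Iic t,
                2 ^ k * ((k.factorial / a.re ^ k) * ‖ψ s‖ + ‖s‖ ^ k * ‖ψ s‖) := by
          refine setIntegral_mono_on (((hInt t).norm).const_mul _) hdomInt.restrict
            measurableSet_Iic ?_
          intro s hs
          simp only [Set.mem_Iic] at hs
          rw [hgnorm s]
          have key : ‖t‖ ^ k * Real.exp (-(a.re * t)) * Real.exp (a.re * s)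
              ≤ 2 ^ k * (k.factorial / a.re ^ k + ‖s‖ ^ k) := by
            have hE : Real.exp (-(a.re * t)) * Real.exp (a.re * s)
                = Real.exp (-(a.re * (t - s))) := by
              rw [← Real.exp_add]; ring_nf
            rw [mul_assoc, hE]
            have hts : 0 ≤ t - s := by linarith
            have htabs : ‖t‖ = t := by rw [Real.norm_eq_abs, abs_of_pos ht]
            have hsplit : ‖t‖ ^ k ≤ 2 ^ k * ((t - s) ^ k + ‖s‖ ^ k) := by
              have h1 : ‖t‖ ≤ (t - s) + ‖s‖ := by
                rw [htabs, Real.norm_eq_abs]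
                have := le_abs_self s
                linarith
              have h2 : (t - s) + ‖s‖ ≤ 2 * max (t - s) ‖s‖ := by
                rw [two_mul]
                exact add_le_add (le_max_left _ _) (le_max_right _ _)
              calc ‖t‖ ^ k ≤ (2 * max (t - s) ‖s‖) ^ k :=
                    pow_le_pow_left₀ (norm_nonneg _) (h1.trans h2) k
                _ = 2 ^ k * max (t - s) ‖s‖ ^ k := by rw [mul_pow]
                _ ≤ 2 ^ k * ((t - s) ^ k + ‖s‖ ^ k) := by
                    refine mul_le_mul_of_nonneg_left ?_ (by positivity)
                    rcases max_cases (t - s) ‖s‖ with ⟨hm, _⟩ | ⟨hm, _⟩ <;> rw [hm]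
                    · nlinarith [pow_nonneg (norm_nonneg s) k]
                    · nlinarith [pow_nonneg hts k]
            have hexpbound : (t - s) ^ k * Real.exp (-(a.re * (t - s)))
                ≤ k.factorial / a.re ^ k := by
              have hx : 0 ≤ a.re * (t - s) := mul_nonneg hre.le hts
              have hfac : (0:ℝ) < k.factorial := by positivity
              have hep : 0 < Real.exp (a.re * (t - s)) := Real.exp_pos _
              have hak : (0:ℝ) < a.re ^ k := pow_pos hre k
              have h := Real.pow_div_factorial_le_exp _ hx k
              have h2 : a.re ^ k * (t - s) ^ k
                  ≤ k.factorial * Real.exp (a.re * (t - s)) := by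
                rw [div_le_iff₀ hfac] at h
                calc a.re ^ k * (t - s) ^ k = (a.re * (t - s)) ^ k := (mul_pow _ _ _).symm
                  _ ≤ Real.exp (a.re * (t - s)) * k.factorial := h
                  _ = k.factorial * Real.exp (a.re * (t - s)) := mul_comm _ _
              have h3 := mul_le_mul_of_nonneg_right h2 (inv_pos.2 hep).le
              have h4 : (k.factorial : ℝ) * Real.exp (a.re * (t - s))
                  * (Real.exp (a.re * (t - s)))⁻¹ = k.factorial := by field_simp
              rw [Real.exp_neg, div_eq_mul_inv, ← h4]
              calc (t - s) ^ k * (Real.exp (a.re * (t - s)))⁻¹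
                  = a.re ^ k * (t - s) ^ k * (Real.exp (a.re * (t - s)))⁻¹ * (a.re ^ k)⁻¹ := by
                    field_simp
                _ ≤ k.factorial * Real.exp (a.re * (t - s))
                    * (Real.exp (a.re * (t - s)))⁻¹ * (a.re ^ k)⁻¹ := by
                    exact mul_le_mul_of_nonneg_right h3 (inv_pos.2 hak).le
                _ = k.factorial * Real.exp (a.re * (t - s))
                    * (Real.exp (a.re * (t - s)))⁻¹ * ((a.re ^ k)⁻¹ : ℝ) := rfl
            have hexp1 : Real.exp (-(a.re * (t - s))) ≤ 1 := by
              refine Real.exp_le_one_iff.2 (by nlinarith)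
            calc ‖t‖ ^ k * Real.exp (-(a.re * (t - s)))
                ≤ (2 ^ k * ((t - s) ^ k + ‖s‖ ^ k)) * Real.exp (-(a.re * (t - s))) := by
                  exact mul_le_mul_of_nonneg_right hsplit (Real.exp_pos _).le
              _ = 2 ^ k * ((t - s) ^ k * Real.exp (-(a.re * (t - s)))
                    + ‖s‖ ^ k * Real.exp (-(a.re * (t - s)))) := by ring
              _ ≤ 2 ^ k * (k.factorial / a.re ^ k + ‖s‖ ^ k) := by
                  refine mul_le_mul_of_nonneg_left ?_ (by positivity)
                  refine add_le_add hexpbound ?_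
                  nlinarith [pow_nonneg (norm_nonneg s) k, hexp1,
                    (Real.exp_pos (-(a.re * (t - s)))).le]
          calc ‖t‖ ^ k * Real.exp (-(a.re * t)) * (Real.exp (a.re * s) * ‖ψ s‖)
              = (‖t‖ ^ k * Real.exp (-(a.re * t)) * Real.exp (a.re * s)) * ‖ψ s‖ := by ring
            _ ≤ (2 ^ k * (k.factorial / a.re ^ k + ‖s‖ ^ k)) * ‖ψ s‖ := by
                exact mul_le_mul_of_nonneg_right key (norm_nonneg _)
            _ = 2 ^ k * ((k.factorial / a.re ^ k) * ‖ψ s‖ + ‖s‖ ^ k * ‖ψ s‖) := by ring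
        refine h3.trans ?_
        have h4 : ∫ s in Set.Iic t,
              2 ^ k * ((k.factorial / a.re ^ k) * ‖ψ s‖ + ‖s‖ ^ k * ‖ψ s‖)
            ≤ ∫ s : ℝ, 2 ^ k * ((k.factorial / a.re ^ k) * ‖ψ s‖ + ‖s‖ ^ k * ‖ψ s‖) := by
          refine setIntegral_le_integral hdomInt
            (Filter.Eventually.of_forall fun s => by positivity)
        refine h4.trans ?_
        rw [hC2, hM0, hMk]
        rw [integral_const_mul]
        refine mul_le_mul_of_nonneg_left ?_ (by positivity)
        rw [integral_add (hψInt.const_mul _) hMkInt, integral_const_mul]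
  -- smoothness
  have hdiff : Differentiable ℝ φf := fun t => (hφd t).differentiableAt
  have hderiv : deriv φf = fun t => ψ t - a * φf t := funext fun t => (hφd t).deriv
  have hsm : ∀ n : ℕ, ContDiff ℝ n φf := by
    intro n
    induction n with
    | zero => exact contDiff_zero.2 hdiff.continuous
    | succ n ih =>
      rw [show ((n+1 : ℕ) : WithTop ℕ∞) = (n : WithTop ℕ∞) + 1 by norm_cast]
      refine contDiff_succ_iff_deriv.2 ⟨hdiff, by simp, ?_⟩
      rw [hderiv]
      exact (ψ.smooth n).sub (contDiff_const.mul ih)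
  have hsmooth : ContDiff ℝ (⊤ : ℕ∞) φf := contDiff_infty.2 hsm
  -- derivative structure
  have hstruct : ∀ n : ℕ, ∃ g : SchwartzMap ℝ ℂ,
      ∀ t, iteratedDeriv n φf t = g t + (-a) ^ n * φf t := by
    intro n
    induction n with
    | zero => exact ⟨0, fun t => by simp [iteratedDeriv_zero]⟩
    | succ n ih =>
      obtain ⟨g, hgs⟩ := ih
      refine ⟨SchwartzMap.derivCLM ℂ ℂ g + ((-a) ^ n) • ψ, fun t => ?_⟩
      rw [iteratedDeriv_succ]
      have h1 : iteratedDeriv n φf = fun t => g t + (-a) ^ n * φf t := funext hgs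
      rw [h1]
      have h2 : HasDerivAt (fun t => g t + (-a) ^ n * φf t)
          (deriv (⇑g) t + (-a) ^ n * (ψ t - a * φf t)) t :=
        (g.differentiableAt.hasDerivAt).add ((hφd t).const_mul _)
      rw [h2.deriv]
      simp only [SchwartzMap.add_apply, SchwartzMap.smul_apply, SchwartzMap.derivCLM_apply,
        smul_eq_mul]
      ring
  -- build the Schwartz map
  refine ⟨⟨φf, hsmooth, ?_⟩, fun t => (hφd t).deriv⟩
  intro k n
  obtain ⟨g, hgs⟩ := hstruct n
  obtain ⟨Cg, _, hCg⟩ := g.decay k 0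
  obtain ⟨Cφ, hCφ⟩ := decay0 k
  refine ⟨Cg + ‖a‖ ^ n * Cφ, fun x => ?_⟩
  rw [norm_iteratedFDeriv_eq_norm_iteratedDeriv, hgs x]
  calc ‖x‖ ^ k * ‖g x + (-a) ^ n * φf x‖
      ≤ ‖x‖ ^ k * (‖g x‖ + ‖a‖ ^ n * ‖φf x‖) := by
        refine mul_le_mul_of_nonneg_left ?_ (by positivity)
        refine (norm_add_le _ _).trans ?_
        rw [norm_mul, norm_pow, norm_neg]
    _ = ‖x‖ ^ k * ‖g x‖ + ‖a‖ ^ n * (‖x‖ ^ k * ‖φf x‖) := by ring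
    _ ≤ Cg + ‖a‖ ^ n * Cφ := by
        refine add_le_add ?_ (mul_le_mul_of_nonneg_left (hCφ x) (by positivity))
        have := hCg x
        rwa [norm_iteratedFDeriv_zero] at this




/-- Compactly supported smooth functions are Schwartz. -/
lemma schwartz_of_compact (f : ℝ → ℂ) (hsm : ContDiff ℝ (⊤ : ℕ∞) f)
    (hcs : HasCompactSupport f) : ∃ φ : SchwartzMap ℝ ℂ, ⇑φ = f := by
  refine ⟨⟨f, hsm, fun k n => ?_⟩, rfl⟩
  have h1 : Continuous fun x : ℝ => ‖x‖ ^ k * ‖iteratedFDeriv ℝ n f x‖ :=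
    (continuous_norm.pow k).mul (hsm.continuous_iteratedFDeriv (mod_cast le_top)).norm
  have h2 : HasCompactSupport fun x : ℝ => ‖x‖ ^ k * ‖iteratedFDeriv ℝ n f x‖ :=
    ((hcs.iteratedFDeriv n).norm).mul_left
  obtain ⟨C, hC⟩ := h1.bounded_above_of_compact_support h2
  exact ⟨C, fun x => (Real.le_norm_self _).trans (hC x)⟩

/-- A Schwartz bump supported in the negative reals with exponential moment 1. -/
lemma exists_bump (a : ℂ) : ∃ ψ₀ : SchwartzMap ℝ ℂ, tsupport ⇑ψ₀ ⊆ Set.Iio 0 ∧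
    ∫ s : ℝ, Complex.exp (a * s) * ψ₀ s = 1 := by
  set u : ContDiffBump (-2 : ℝ) := ⟨1/2, 1, by norm_num, by norm_num⟩ with hu
  set f : ℝ → ℂ := fun s => Complex.exp (-(a * s)) * (u s : ℂ) with hf
  have hsm : ContDiff ℝ (⊤ : ℕ∞) f := by
    refine ContDiff.mul ?_ (Complex.ofRealCLM.contDiff.comp u.contDiff)
    have h1 : ContDiff ℝ (⊤ : ℕ∞) fun s : ℝ => -(a * (s : ℂ)) :=
      (contDiff_const.mul Complex.ofRealCLM.contDiff).neg
    exact Complex.contDiff_exp.comp h1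
  have hcs : HasCompactSupport f := by
    have : HasCompactSupport fun s : ℝ => ((u s : ℝ) : ℂ) :=
      u.hasCompactSupport.comp_left (g := fun x : ℝ => (x : ℂ)) (by simp)
    exact this.mul_left
  obtain ⟨φ, hφ⟩ := schwartz_of_compact f hsm hcs
  have hsupp : tsupport ⇑φ ⊆ Set.Iio 0 := by
    rw [hφ]
    have h1 : Function.support f ⊆ Function.support fun s : ℝ => ((u s : ℝ) : ℂ) :=
      Function.support_mul_subset_right _ _
    have h2 : Function.support (fun s : ℝ => ((u s : ℝ) : ℂ)) = Function.support u := by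
      ext x; simp
    have h3 : tsupport f ⊆ tsupport (u : ℝ → ℝ) := by
      refine closure_minimal ?_ (isClosed_tsupport _)
      refine (h1.trans ?_)
      rw [h2]; exact subset_tsupport _
    refine h3.trans ?_
    rw [u.tsupport_eq]
    intro x hx
    rw [Real.closedBall_eq_Icc, Set.mem_Icc] at hx
    have hr : u.rOut = 1 := by rw [hu]
    rw [hr] at hx
    simp only [Set.mem_Iio]
    linarith [hx.2]
  have hmom : ∫ s : ℝ, Complex.exp (a * s) * φ s = ((∫ s : ℝ, u s : ℝ) : ℂ) := by
    have : (fun s : ℝ => Complex.exp (a * s) * φ s) = fun s : ℝ => ((u s : ℝ) : ℂ) := by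
      funext s
      rw [hφ, hf]
      have : Complex.exp (a * s) * Complex.exp (-(a * s)) = 1 := by
        rw [← Complex.exp_add]; ring_nf; exact Complex.exp_zero
      calc Complex.exp (a * s) * (Complex.exp (-(a * s)) * (u s : ℂ))
          = (Complex.exp (a * s) * Complex.exp (-(a * s))) * (u s : ℂ) := by ring
        _ = (u s : ℂ) := by rw [this, one_mul]
    rw [this]
    exact integral_ofReal
  have hupos : (0 : ℝ) < ∫ s : ℝ, u s := u.integral_pos
  set c : ℂ := ((∫ s : ℝ, u s : ℝ) : ℂ) with hc
  have hcne : c ≠ 0 := by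
    simp only [hc, ne_eq, Complex.ofReal_eq_zero]
    exact hupos.ne'
  refine ⟨c⁻¹ • φ, ?_, ?_⟩
  · refine subset_trans (closure_minimal ?_ (isClosed_tsupport _)) hsupp
    intro x hx
    have : (c⁻¹ • φ) x = c⁻¹ * φ x := rfl
    by_contra hx'
    have : φ x = 0 := image_eq_zero_of_notMem_tsupport hx'
    simp [Function.mem_support, SchwartzMap.smul_apply, this] at hx
  · have : (fun s : ℝ => Complex.exp (a * s) * (c⁻¹ • φ) s)
        = fun s : ℝ => c⁻¹ * (Complex.exp (a * s) * φ s) := by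
      funext s
      simp only [SchwartzMap.smul_apply, smul_eq_mul]
      ring
    rw [this, integral_const_mul, hmom, inv_mul_cancel₀ hcne]

/-- Causality for complex-linear functionals. -/
def IsCausalC (S : SchwartzMap ℝ ℂ →ₗ[ℂ] ℂ) : Prop :=
  ∀ φ : SchwartzMap ℝ ℂ, tsupport ⇑φ ⊆ Set.Iio 0 → S φ = 0

/-- Core uniqueness: a causal functional annihilating the range of `d/dt + a` is zero. -/
lemma core_kernel (S : SchwartzMap ℝ ℂ →ₗ[ℂ] ℂ) (hS : IsCausalC S) (a : ℂ)
    (h : ∀ φ : SchwartzMap ℝ ℂ, S (SchwartzMap.derivCLM ℂ ℂ φ + a • φ) = 0) :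
    ∀ ψ : SchwartzMap ℝ ℂ, S ψ = 0 := by
  have sol2schwartz : ∀ (φ ψ : SchwartzMap ℝ ℂ), (∀ t, deriv (⇑φ) t = ψ t - a * φ t) →
      SchwartzMap.derivCLM ℂ ℂ φ + a • φ = ψ := by
    intro φ ψ hd
    ext t
    simp only [SchwartzMap.add_apply, SchwartzMap.smul_apply, SchwartzMap.derivCLM_apply,
      smul_eq_mul]
    rw [hd t]; ring
  set Rf : SchwartzMap ℝ ℂ → SchwartzMap ℝ ℂ := fun χ =>
    SchwartzMap.compCLMOfContinuousLinearEquiv ℝ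
      (ContinuousLinearEquiv.neg ℝ : ℝ ≃L[ℝ] ℝ) (F := ℂ) χ with hRf
  have hRapp : ∀ (χ : SchwartzMap ℝ ℂ) (t : ℝ), (Rf χ) t = χ (-t) := by
    intro χ t
    simp [hRf, SchwartzMap.compCLMOfContinuousLinearEquiv_apply]
  intro ψ
  rcases lt_trichotomy a.re 0 with hlt | heq | hgt
  · -- negative real part: reflect
    obtain ⟨χ, hχ⟩ := exists_schwartz_sol (-a) (by rw [Complex.neg_re]; linarith)
      (Rf ψ) (by intro hcon; exfalso; rw [Complex.neg_re, neg_eq_zero] at hcon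
                 exact hlt.ne hcon)
    have key : SchwartzMap.derivCLM ℂ ℂ (-(Rf χ)) + a • (-(Rf χ)) = ψ := by
      apply sol2schwartz
      intro t
      have h1 : ⇑(-(Rf χ)) = fun t => -(χ (-t)) := by
        funext t
        rw [show (-(Rf χ)) t = -((Rf χ) t) from rfl, hRapp]
      rw [h1]
      have h2 : deriv (fun t : ℝ => -(χ (-t))) t = deriv (⇑χ) (-t) := by
        rw [show (fun t : ℝ => -(χ (-t))) = fun t : ℝ => (fun s => -(χ s)) (-t) from rfl,
          deriv_comp_neg (fun s => -(χ s)) t, deriv.fun_neg]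
        ring
      rw [h2, hχ (-t)]
      have h3 : (Rf ψ) (-t) = ψ t := by rw [hRapp]; norm_num
      rw [h3]
      ring
    rw [← key]; exact h _
  · -- purely imaginary
    obtain ⟨ψ₀, hψ₀s, hψ₀m⟩ := exists_bump a
    have hIntegrable : ∀ χ : SchwartzMap ℝ ℂ,
        Integrable fun s : ℝ => Complex.exp (a * s) * χ s := by
      intro χ
      refine Integrable.mono (χ.integrable (μ := volume)).norm
        ((by fun_prop : Continuous fun s : ℝ => Complex.exp (a * s) * χ s).aestronglyMeasurable)
        (Filter.Eventually.of_forall fun s => ?_)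
      rw [norm_mul, norm_exp_mul_ofReal, heq, norm_norm]
      simp
    set c : ℂ := ∫ s : ℝ, Complex.exp (a * s) * ψ s with hcdef
    have hmom0 : ∫ s : ℝ, Complex.exp (a * s) * (ψ - c • ψ₀) s = 0 := by
      have hrw : (fun s : ℝ => Complex.exp (a * s) * (ψ - c • ψ₀) s)
          = fun s : ℝ => Complex.exp (a * s) * ψ s - c * (Complex.exp (a * s) * ψ₀ s) := by
        funext s
        simp only [SchwartzMap.sub_apply, SchwartzMap.smul_apply, smul_eq_mul]
        ring
      rw [hrw, integral_sub (hIntegrable ψ) ((hIntegrable ψ₀).const_mul c),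
        integral_const_mul, hψ₀m, ← hcdef]
      ring
    obtain ⟨φ, hφ⟩ := exists_schwartz_sol a heq.ge (ψ - c • ψ₀) (fun _ => hmom0)
    have h1 : S (ψ - c • ψ₀) = 0 := by
      rw [← sol2schwartz φ _ hφ]
      exact h φ
    have h2 : S ψ₀ = 0 := hS ψ₀ hψ₀s
    have h3 := map_sub S ψ (c • ψ₀)
    rw [h1, _root_.map_smul, h2, smul_eq_mul, mul_zero, sub_zero] at h3
    exact h3.symm
  · obtain ⟨φ, hφ⟩ := exists_schwartz_sol a hgt.le ψ (fun hcon => absurd hcon hgt.ne')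
    rw [← sol2schwartz φ ψ hφ]
    exact h φ




/-- `-d/dt` on complex Schwartz space. -/
def Ec : Module.End ℂ (SchwartzMap ℝ ℂ) := -(SchwartzMap.derivCLM ℂ ℂ).toLinearMap

/-- `-d/dt` on real Schwartz space. -/
def Er : Module.End ℝ (SchwartzMap ℝ ℝ) := -(SchwartzMap.derivCLM ℝ ℝ).toLinearMap

lemma Ec_apply (φ : SchwartzMap ℝ ℂ) : Ec φ = -(SchwartzMap.derivCLM ℂ ℂ φ) := rfl

lemma Er_apply (φ : SchwartzMap ℝ ℝ) : Er φ = -(SchwartzMap.derivCLM ℝ ℝ φ) := rfl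

lemma tsupport_Ec_sub (b : ℂ) (φ : SchwartzMap ℝ ℂ) :
    tsupport ⇑((Ec - algebraMap ℂ (Module.End ℂ (SchwartzMap ℝ ℂ)) b) φ) ⊆ tsupport ⇑φ := by
  have h1 : ((Ec - algebraMap ℂ (Module.End ℂ (SchwartzMap ℝ ℂ)) b) φ)
      = -(SchwartzMap.derivCLM ℂ ℂ φ) - b • φ := by
    rw [LinearMap.sub_apply, Ec_apply, Module.algebraMap_end_apply]
  rw [h1]
  refine (closure_minimal ?_ (isClosed_tsupport _))
  intro x hx
  simp only [Function.mem_support] at hx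
  have hx' : -(deriv (⇑φ) x) - b * φ x ≠ 0 := by
    simpa [SchwartzMap.sub_apply, SchwartzMap.smul_apply, SchwartzMap.derivCLM_apply] using hx
  by_cases hd : deriv (⇑φ) x = 0
  · have hφx : φ x ≠ 0 := by
      intro h0; exact hx' (by rw [hd, h0]; ring)
    exact subset_tsupport _ hφx
  · have : x ∈ Function.support (deriv (⇑φ)) := hd
    exact support_deriv_subset this

/-- Induction over linear factors. -/
lemma list_ker (R : List ℂ) :
    ∀ S : SchwartzMap ℝ ℂ →ₗ[ℂ] ℂ, IsCausalC S →
    (∀ φ, S (((R.map fun b => Ec - algebraMap ℂ (Module.End ℂ (SchwartzMap ℝ ℂ)) b).prod) φ)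
      = 0) → S = 0 := by
  induction R with
  | nil =>
    intro S _ h
    refine LinearMap.ext fun ψ => ?_
    simpa using h ψ
  | cons b R ih =>
    intro S hc h
    set A : Module.End ℂ (SchwartzMap ℝ ℂ) :=
      (R.map fun b => Ec - algebraMap ℂ (Module.End ℂ (SchwartzMap ℝ ℂ)) b).prod with hA
    set S' : SchwartzMap ℝ ℂ →ₗ[ℂ] ℂ :=
      S ∘ₗ (Ec - algebraMap ℂ (Module.End ℂ (SchwartzMap ℝ ℂ)) b) with hS'
    have h' : ∀ φ, S' (A φ) = 0 := by
      intro φ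
      have h0 := h φ
      rw [List.map_cons, List.prod_cons] at h0
      simpa [hS', hA, Module.End.mul_apply] using h0
    have hc' : IsCausalC S' := fun φ hsupp => hc _ ((tsupport_Ec_sub b φ).trans hsupp)
    have hS'0 : S' = 0 := ih S' hc' h'
    -- now S annihilates the range of (Ec - b), apply the core lemma
    refine LinearMap.ext fun ψ => ?_
    refine core_kernel S hc b (fun φ => ?_) ψ
    have h1 := congrFun (congrArg DFunLike.coe hS'0) φ
    simp only [hS', LinearMap.comp_apply, LinearMap.zero_apply] at h1
    have h2 : (Ec - algebraMap ℂ (Module.End ℂ (SchwartzMap ℝ ℂ)) b) φ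
        = -(SchwartzMap.derivCLM ℂ ℂ φ + b • φ) := by
      rw [LinearMap.sub_apply, Ec_apply, Module.algebraMap_end_apply]
      module
    rw [h2] at h1
    rw [← neg_eq_zero, ← map_neg]
    exact h1




variable {F G : Type*} [NormedAddCommGroup F] [NormedSpace ℝ F]
  [NormedAddCommGroup G] [NormedSpace ℝ G]

/-- Postcomposition of a Schwartz function with a continuous linear map. -/
def postcomp (g : F →L[ℝ] G) (φ : SchwartzMap ℝ F) : SchwartzMap ℝ G where
  toFun := ⇑g ∘ ⇑φ
  smooth' := g.contDiff.comp φ.smooth'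
  decay' := by
    intro k n
    obtain ⟨C, hC⟩ := φ.decay' k n
    refine ⟨‖g‖ * C, fun x => ?_⟩
    have hcomp := g.iteratedFDeriv_comp_left ((φ.smooth (⊤ : ℕ∞)).contDiffAt (x := x)) (i := n)
      (by exact_mod_cast le_top)
    rw [hcomp]
    calc ‖x‖ ^ k * ‖g.compContinuousMultilinearMap (iteratedFDeriv ℝ n (⇑φ) x)‖
        ≤ ‖x‖ ^ k * (‖g‖ * ‖iteratedFDeriv ℝ n (⇑φ) x‖) := by
          refine mul_le_mul_of_nonneg_left ?_ (by positivity)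
          exact g.norm_compContinuousMultilinearMap_le _
      _ = ‖g‖ * (‖x‖ ^ k * ‖iteratedFDeriv ℝ n (⇑φ) x‖) := by ring
      _ ≤ ‖g‖ * C := mul_le_mul_of_nonneg_left (hC x) (norm_nonneg _)

@[simp] lemma postcomp_apply (g : F →L[ℝ] G) (φ : SchwartzMap ℝ F) (x : ℝ) :
    postcomp g φ x = g (φ x) := rfl

lemma tsupport_postcomp (g : F →L[ℝ] G) (φ : SchwartzMap ℝ F) :
    tsupport ⇑(postcomp g φ) ⊆ tsupport ⇑φ := by
  refine closure_minimal ?_ (isClosed_tsupport _)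
  intro x hx
  simp only [Function.mem_support, postcomp_apply] at hx
  have : φ x ≠ 0 := fun h0 => hx (by rw [h0]; exact map_zero g)
  exact subset_tsupport _ this

/-- Complexification of a real tempered distribution, as a `ℂ`-linear functional. -/
def cext (T : TD) : SchwartzMap ℝ ℂ →ₗ[ℂ] ℂ where
  toFun φ := (T (postcomp Complex.reCLM φ) : ℂ) + Complex.I * (T (postcomp Complex.imCLM φ))
  map_add' φ ψ := by
    have hre : postcomp Complex.reCLM (φ + ψ)
        = postcomp Complex.reCLM φ + postcomp Complex.reCLM ψ := by
      ext x; simp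
    have him : postcomp Complex.imCLM (φ + ψ)
        = postcomp Complex.imCLM φ + postcomp Complex.imCLM ψ := by
      ext x; simp
    rw [hre, him, map_add, map_add]
    try push_cast
    try ring
  map_smul' c φ := by
    have hre : postcomp Complex.reCLM (c • φ)
        = c.re • postcomp Complex.reCLM φ - c.im • postcomp Complex.imCLM φ := by
      ext x
      simp [Complex.mul_re, Complex.smul_re]
    have him : postcomp Complex.imCLM (c • φ)
        = c.re • postcomp Complex.imCLM φ + c.im • postcomp Complex.reCLM φ := by
      ext x
      simp [Complex.mul_im, Complex.smul_im]
      try ring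
    rw [hre, him, map_sub, map_add, T.map_smul, T.map_smul, T.map_smul, T.map_smul]
    simp only [smul_eq_mul, RingHom.id_apply]
    apply Complex.ext <;> simp <;> ring

lemma cext_causal (T : TD) (hT : IsCausalTD T) : IsCausalC (cext T) := by
  intro φ hsupp
  have h1 : T (postcomp Complex.reCLM φ) = 0 := hT _ ((tsupport_postcomp _ _).trans hsupp)
  have h2 : T (postcomp Complex.imCLM φ) = 0 := hT _ ((tsupport_postcomp _ _).trans hsupp)
  simp [cext, h1, h2]

lemma postcomp_Ec (g : ℂ →L[ℝ] ℝ) (φ : SchwartzMap ℝ ℂ) :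
    postcomp g (Ec φ) = Er (postcomp g φ) := by
  ext x
  have hder : deriv (fun y : ℝ => g (φ y)) x = g (deriv (⇑φ) x) :=
    (g.hasFDerivAt.comp_hasDerivAt x (φ.differentiableAt.hasDerivAt)).deriv
  have h1 : (postcomp g (Ec φ)) x = g (-(deriv (⇑φ) x)) := by
    rw [postcomp_apply]
    congr 1
    try rw [Ec_apply]
    try rw [show (-(SchwartzMap.derivCLM ℂ ℂ φ)) x = -((SchwartzMap.derivCLM ℂ ℂ φ) x) from rfl]
    try rw [SchwartzMap.derivCLM_apply]
  have h2 : (Er (postcomp g φ)) x = -(deriv (fun y : ℝ => g (φ y)) x) := by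
    rw [Er_apply, show (-(SchwartzMap.derivCLM ℝ ℝ (postcomp g φ))) x
      = -((SchwartzMap.derivCLM ℝ ℝ (postcomp g φ)) x) from rfl, SchwartzMap.derivCLM_apply]
    rfl
  rw [h1, h2, hder, map_neg]

lemma postcomp_real_smul (g : ℂ →L[ℝ] ℝ) (r : ℝ) (φ : SchwartzMap ℝ ℂ) :
    postcomp g ((r : ℂ) • φ) = r • postcomp g φ := by
  ext x
  simp only [postcomp_apply, SchwartzMap.smul_apply, smul_eq_mul, ← Complex.real_smul]
  rw [g.map_smul]
  rfl

lemma postcomp_Ec_pow (g : ℂ →L[ℝ] ℝ) (n : ℕ) (φ : SchwartzMap ℝ ℂ) :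
    postcomp g ((Ec ^ n) φ) = (Er ^ n) (postcomp g φ) := by
  induction n with
  | zero => simp
  | succ n ih =>
    rw [pow_succ', pow_succ', Module.End.mul_apply, Module.End.mul_apply, ← ih, postcomp_Ec]

lemma postcomp_aeval (g : ℂ →L[ℝ] ℝ) (p : Polynomial ℝ) (φ : SchwartzMap ℝ ℂ) :
    postcomp g ((Polynomial.aeval Ec (p.map (algebraMap ℝ ℂ))) φ)
      = (Polynomial.aeval Er p) (postcomp g φ) := by
  induction p using Polynomial.induction_on' with
  | add p q hp hq =>
    rw [Polynomial.map_add, Polynomial.aeval_add, Polynomial.aeval_add,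
      LinearMap.add_apply, LinearMap.add_apply]
    have hadd : ∀ (ξ η : SchwartzMap ℝ ℂ), postcomp g (ξ + η) = postcomp g ξ + postcomp g η := by
      intro ξ η; ext x; simp
    rw [hadd, hp, hq]
  | monomial n r =>
    rw [Polynomial.map_monomial, Polynomial.aeval_monomial, Polynomial.aeval_monomial,
      Module.End.mul_apply, Module.End.mul_apply, Module.algebraMap_end_apply,
      Module.algebraMap_end_apply, Complex.coe_algebraMap]
    rw [postcomp_real_smul, postcomp_Ec_pow]

/-- The action of `odo` seen on test functions. -/
lemma dop_pow_apply (n : ℕ) (T : TD) (φ : SchwartzMap ℝ ℝ) :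
    ((Dop ^ n) T) φ = T ((Er ^ n) φ) := by
  induction n generalizing T with
  | zero => simp
  | succ n ih =>
    rw [pow_succ, Module.End.mul_apply, ih (Dop T), pow_succ']
    rw [Module.End.mul_apply]
    have h1 : (Dop T) ((Er ^ n) φ) = -(T (SchwartzMap.derivCLM ℝ ℝ ((Er ^ n) φ))) := rfl
    have h2 : Er ((Er ^ n) φ) = -(SchwartzMap.derivCLM ℝ ℝ ((Er ^ n) φ)) := rfl
    rw [h1, h2, map_neg]

lemma odo_apply_test (p : Polynomial ℝ) (T : TD) (φ : SchwartzMap ℝ ℝ) :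
    (odo p T) φ = T ((Polynomial.aeval Er p) φ) := by
  induction p using Polynomial.induction_on' with
  | add p q hp hq =>
    show ((Polynomial.aeval Dop) (p + q) T) φ = _
    rw [Polynomial.aeval_add, Polynomial.aeval_add, LinearMap.add_apply,
      ContinuousLinearMap.add_apply, LinearMap.add_apply, map_add]
    exact congrArg₂ (· + ·) hp hq
  | monomial n r =>
    show ((Polynomial.aeval Dop) (Polynomial.monomial n r) T) φ = _
    rw [Polynomial.aeval_monomial, Polynomial.aeval_monomial,
      Module.End.mul_apply, Module.End.mul_apply, Module.algebraMap_end_apply,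
      Module.algebraMap_end_apply]
    try rw [ContinuousLinearMap.smul_apply]
    try rw [dop_pow_apply]
    try rw [T.map_smul]
    try rfl

lemma cext_aeval_zero (p : Polynomial ℝ) (T : TD) (hT : odo p T = 0) (φ : SchwartzMap ℝ ℂ) :
    cext T ((Polynomial.aeval Ec (p.map (algebraMap ℝ ℂ))) φ) = 0 := by
  have h0 : ∀ ψ : SchwartzMap ℝ ℝ, T ((Polynomial.aeval Er p) ψ) = 0 := by
    intro ψ
    rw [← odo_apply_test, hT]
    rfl
  show (T (postcomp Complex.reCLM _) : ℂ) + Complex.I * (T (postcomp Complex.imCLM _)) = 0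
  rw [postcomp_aeval, postcomp_aeval, h0, h0]
  simp

/-- A causal distribution annihilated by a nonzero constant-coefficient ODE vanishes. -/
lemma causal_kernel (p : Polynomial ℝ) (hp : p ≠ 0) (T : TD) (hT : IsCausalTD T)
    (h : odo p T = 0) : T = 0 := by
  set P : Polynomial ℂ := p.map (algebraMap ℝ ℂ) with hP
  have hPne : P ≠ 0 := (Polynomial.map_ne_zero_iff (algebraMap ℝ ℂ).injective).2 hp
  have hsplit : P = Polynomial.C P.leadingCoeff
      * (P.roots.map fun a => Polynomial.X - Polynomial.C a).prod :=
    by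
      have h := (IsAlgClosed.splits P).natDegree_eq_card_roots
      exact (Polynomial.C_leadingCoeff_mul_prod_multiset_X_sub_C (by omega)).symm
  have hlc : P.leadingCoeff ≠ 0 := Polynomial.leadingCoeff_ne_zero.2 hPne
  -- convert to list
  set l : List ℂ := P.roots.toList with hl
  have hlprod : (P.roots.map fun a => Polynomial.X - Polynomial.C a).prod
      = ((l.map fun a => Polynomial.X - Polynomial.C a).prod : Polynomial ℂ) := by
    conv_lhs => rw [← Multiset.coe_toList P.roots]
    rw [Multiset.map_coe, Multiset.prod_coe]
  have hker : ∀ φ : SchwartzMap ℝ ℂ,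
      cext T (((l.map fun b =>
        Ec - algebraMap ℂ (Module.End ℂ (SchwartzMap ℝ ℂ)) b).prod) φ) = 0 := by
    intro φ
    have h1 := cext_aeval_zero p T h φ
    rw [← hP, hsplit, hlprod] at h1
    rw [map_mul, Polynomial.aeval_C] at h1
    have h2 : (Polynomial.aeval Ec) ((l.map fun a => Polynomial.X - Polynomial.C a).prod)
        = (l.map fun b => Ec - algebraMap ℂ (Module.End ℂ (SchwartzMap ℝ ℂ)) b).prod := by
      rw [map_list_prod (Polynomial.aeval Ec : Polynomial ℂ →ₐ[ℂ] _), List.map_map]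
      have hfun : (⇑(Polynomial.aeval Ec) ∘ fun a => Polynomial.X - Polynomial.C a)
          = fun b => Ec - algebraMap ℂ (Module.End ℂ (SchwartzMap ℝ ℂ)) b := by
        funext a
        simp only [Function.comp_apply, map_sub, Polynomial.aeval_X, Polynomial.aeval_C]
      rw [hfun]
    rw [h2] at h1
    rw [Module.End.mul_apply, Module.algebraMap_end_apply, LinearMap.map_smul] at h1
    exact (smul_eq_zero.1 h1).resolve_left hlc
  have hz := list_ker l (cext T) (cext_causal T hT) hker
  ext φ
  have h1 : cext T (postcomp Complex.ofRealCLM φ) = 0 := by rw [hz]; rfl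
  have h2 : postcomp Complex.reCLM (postcomp Complex.ofRealCLM φ) = φ := by ext x; simp
  have h3 : postcomp Complex.imCLM (postcomp Complex.ofRealCLM φ) = 0 := by ext x; simp
  have h4 : (T (postcomp Complex.reCLM (postcomp Complex.ofRealCLM φ)) : ℂ)
      + Complex.I * (T (postcomp Complex.imCLM (postcomp Complex.ofRealCLM φ))) = 0 := h1
  rw [h2, h3, map_zero] at h4
  simp only [Complex.ofReal_zero, mul_zero, add_zero, Complex.ofReal_eq_zero] at h4
  simpa using h4




open Polynomial

lemma odo_mul (p q : Polynomial ℝ) (T : TD) : odo (p * q) T = odo p (odo q T) := by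
  rw [odo, odo, odo, map_mul, Module.End.mul_apply]

lemma odo_sum_poly {ι : Type*} (s : Finset ι) (p : ι → Polynomial ℝ) (T : TD) :
    odo (∑ e ∈ s, p e) T = ∑ e ∈ s, odo (p e) T := by
  rw [odo, map_sum, LinearMap.sum_apply]
  rfl

lemma odo_zero_poly (T : TD) : odo (0 : Polynomial ℝ) T = 0 := by
  rw [odo, map_zero]; rfl

-- causality lemmas
lemma tsupport_Er_pow (n : ℕ) (φ : SchwartzMap ℝ ℝ) :
    tsupport ⇑((Er ^ n) φ) ⊆ tsupport ⇑φ := by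
  induction n with
  | zero => simp
  | succ n ih =>
    rw [pow_succ', Module.End.mul_apply]
    refine subset_trans ?_ ih
    refine closure_minimal ?_ (isClosed_tsupport _)
    intro x hx
    have hx' : (Er ((Er ^ n) φ)) x ≠ 0 := hx
    have heq : (Er ((Er ^ n) φ)) x = -(deriv (⇑((Er ^ n) φ)) x) := by
      rw [Er_apply, show (-(SchwartzMap.derivCLM ℝ ℝ ((Er ^ n) φ))) x
        = -((SchwartzMap.derivCLM ℝ ℝ ((Er ^ n) φ)) x) from rfl, SchwartzMap.derivCLM_apply]
    rw [heq] at hx'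
    have : deriv (⇑((Er ^ n) φ)) x ≠ 0 := fun h0 => hx' (by rw [h0]; ring)
    exact support_deriv_subset this

lemma tsupport_aeval_Er (p : Polynomial ℝ) (φ : SchwartzMap ℝ ℝ) :
    tsupport ⇑((Polynomial.aeval Er p) φ) ⊆ tsupport ⇑φ := by
  induction p using Polynomial.induction_on' with
  | add p q hp hq =>
    rw [Polynomial.aeval_add, LinearMap.add_apply]
    have hcoe : ⇑((Polynomial.aeval Er p) φ + (Polynomial.aeval Er q) φ)
        = ⇑((Polynomial.aeval Er p) φ) + ⇑((Polynomial.aeval Er q) φ) := by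
      funext x; rfl
    rw [hcoe]
    refine subset_trans (tsupport_add ⇑((Polynomial.aeval Er p) φ) ⇑((Polynomial.aeval Er q) φ)) ?_
    exact Set.union_subset hp hq
  | monomial n r =>
    rw [Polynomial.aeval_monomial, Module.End.mul_apply, Module.algebraMap_end_apply]
    refine subset_trans ?_ (tsupport_Er_pow n φ)
    refine closure_minimal ?_ (isClosed_tsupport _)
    intro x hx
    have : ((Er ^ n) φ) x ≠ 0 := by
      intro h0
      simp only [Function.mem_support, SchwartzMap.smul_apply, h0, smul_zero] at hx
      exact hx rfl
    exact subset_tsupport _ this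

lemma isCausal_odo (p : Polynomial ℝ) (T : TD) (h : IsCausalTD T) : IsCausalTD (odo p T) := by
  intro φ hs
  rw [odo_apply_test]
  exact h _ ((tsupport_aeval_Er p φ).trans hs)

lemma diracTD_apply (φ : SchwartzMap ℝ ℝ) : diracTD φ = φ 0 := rfl

lemma isCausal_dirac : IsCausalTD diracTD := by
  intro φ hs
  have h0 : (0 : ℝ) ∉ tsupport ⇑φ := fun hmem => by
    have := hs hmem
    simp at this
  have := image_eq_zero_of_notMem_tsupport h0
  simpa [diracTD_apply] using this

lemma isCausal_zero : IsCausalTD 0 := fun _ _ => rfl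

lemma isCausal_sum {ι : Type*} (s : Finset ι) (f : ι → TD) (h : ∀ i ∈ s, IsCausalTD (f i)) :
    IsCausalTD (∑ i ∈ s, f i) := by
  intro φ hs
  rw [ContinuousLinearMap.sum_apply]
  exact Finset.sum_eq_zero fun i hi => h i hi φ hs

lemma isCausal_sub (T S : TD) (hT : IsCausalTD T) (hS : IsCausalTD S) : IsCausalTD (T - S) := by
  intro φ hs
  rw [ContinuousLinearMap.sub_apply, hT φ hs, hS φ hs, sub_zero]

section Matrices

variable {D : ℕ} (L : Matrix (Fin D) (Fin D) (Polynomial ℝ)) (G : Matrix (Fin D) (Fin D) TD)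

lemma det_G (hGe : ∀ r c, ∑ d, odo (L r d) (G d c) = if r = c then diracTD else 0)
    (r c : Fin D) :
    odo L.det (G r c) = odo (L.adjugate r c) diracTD := by
  have h2 : ∑ e, odo (L.adjugate r e) (∑ f, odo (L e f) (G f c))
      = odo (L.adjugate r c) diracTD := by
    have hterm : ∀ e : Fin D, odo (L.adjugate r e) (∑ f, odo (L e f) (G f c))
        = if e = c then odo (L.adjugate r e) diracTD else 0 := by
      intro e
      rw [hGe e c]
      split
      · rfl
      · exact map_zero _
    rw [Finset.sum_congr rfl fun e _ => hterm e]
    simp [Finset.sum_ite_eq']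
  have h3 : ∑ e, odo (L.adjugate r e) (∑ f, odo (L e f) (G f c))
      = odo L.det (G r c) := by
    have hstep : ∀ e : Fin D, odo (L.adjugate r e) (∑ f, odo (L e f) (G f c))
        = ∑ f, odo (L.adjugate r e * L e f) (G f c) := by
      intro e
      rw [map_sum]
      exact Finset.sum_congr rfl fun f _ => (odo_mul _ _ _).symm
    rw [Finset.sum_congr rfl fun e _ => hstep e, Finset.sum_comm]
    have hswap : ∀ f : Fin D, ∑ e, odo (L.adjugate r e * L e f) (G f c)
        = odo (if r = f then L.det else 0) (G f c) := by
      intro f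
      rw [← odo_sum_poly]
      congr 1
      have := congrFun (congrFun (Matrix.adjugate_mul L) r) f
      rw [Matrix.mul_apply] at this
      rw [this]
      simp [Matrix.one_apply]
    rw [Finset.sum_congr rfl fun f _ => hswap f]
    have hlast : ∀ f : Fin D, odo (if r = f then L.det else 0) (G f c)
        = if r = f then odo L.det (G f c) else 0 := by
      intro f; split
      · rfl
      · exact odo_zero_poly _
    rw [Finset.sum_congr rfl fun f _ => hlast f]
    simp [Finset.sum_ite_eq]
  rw [← h3, h2]

lemma key_transpose (hdet : L.det ≠ 0) (hcausal : ∀ r c, IsCausalTD (G r c))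
    (hGe : ∀ r c, ∑ d, odo (L r d) (G d c) = if r = c then diracTD else 0)
    (r c : Fin D) :
    ∑ d, odo (L d r) (G c d) = if c = r then diracTD else 0 := by
  set Td : TD := (∑ d, odo (L d r) (G c d)) - (if c = r then diracTD else 0) with hTd
  have hc : IsCausalTD Td := by
    refine isCausal_sub _ _ (isCausal_sum _ _ fun d _ => isCausal_odo _ _ (hcausal c d)) ?_
    split
    · exact isCausal_dirac
    · exact isCausal_zero
  have h0 : odo L.det Td = 0 := by
    rw [hTd, map_sub, map_sum]
    have hterm : ∀ d : Fin D, odo L.det (odo (L d r) (G c d))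
        = odo (L.adjugate c d * L d r) diracTD := by
      intro d
      rw [← odo_mul, mul_comm, odo_mul, det_G L G hGe c d, ← odo_mul,
        mul_comm (L d r) (L.adjugate c d)]
    rw [Finset.sum_congr rfl fun d _ => hterm d, ← odo_sum_poly]
    have hAL : ∑ d, L.adjugate c d * L d r = if c = r then L.det else 0 := by
      have := congrFun (congrFun (Matrix.adjugate_mul L) c) r
      rw [Matrix.mul_apply] at this
      rw [this]
      simp [Matrix.one_apply]
    rw [hAL]
    have hsecond : odo L.det (if c = r then diracTD else 0)
        = if c = r then odo L.det diracTD else 0 := by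
      split
      · rfl
      · exact map_zero _
    rw [hsecond]
    split
    · exact sub_self _
    · rw [odo_zero_poly, sub_zero]
  have hz := causal_kernel L.det hdet Td hc h0
  rw [hTd] at hz
  exact sub_eq_zero.1 hz

end Matrices

-- reversal lemmas
lemma Dop_revTD (T : TD) : Dop (revTD T) = -(revTD (Dop T)) := by
  ext φ
  have hkey : SchwartzMap.derivCLM ℝ ℝ
      (SchwartzMap.compCLMOfContinuousLinearEquiv ℝ (ContinuousLinearEquiv.neg ℝ) φ)
      = -(SchwartzMap.compCLMOfContinuousLinearEquiv ℝ (ContinuousLinearEquiv.neg ℝ)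
          (SchwartzMap.derivCLM ℝ ℝ φ)) := by
    ext x
    have hco : ⇑(SchwartzMap.compCLMOfContinuousLinearEquiv ℝ
        (ContinuousLinearEquiv.neg ℝ) φ) = fun y : ℝ => φ (-y) := by
      funext y
      rw [SchwartzMap.compCLMOfContinuousLinearEquiv_apply]
      simp
    rw [SchwartzMap.derivCLM_apply, hco, deriv_comp_neg]
    have h2 : (-(SchwartzMap.compCLMOfContinuousLinearEquiv ℝ (ContinuousLinearEquiv.neg ℝ)
        (SchwartzMap.derivCLM ℝ ℝ φ))) x
        = -((SchwartzMap.derivCLM ℝ ℝ φ) (-x)) := by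
      rw [show (-(SchwartzMap.compCLMOfContinuousLinearEquiv ℝ (ContinuousLinearEquiv.neg ℝ)
        (SchwartzMap.derivCLM ℝ ℝ φ))) x = -((SchwartzMap.compCLMOfContinuousLinearEquiv ℝ
        (ContinuousLinearEquiv.neg ℝ) (SchwartzMap.derivCLM ℝ ℝ φ)) x) from rfl]
      congr 1
      try rw [SchwartzMap.compCLMOfContinuousLinearEquiv_apply]
      try simp
    rw [h2, SchwartzMap.derivCLM_apply]
  show -(T ((SchwartzMap.compCLMOfContinuousLinearEquiv ℝ (ContinuousLinearEquiv.neg ℝ))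
      ((SchwartzMap.derivCLM ℝ ℝ) φ)))
    = -(-(T ((SchwartzMap.derivCLM ℝ ℝ)
        ((SchwartzMap.compCLMOfContinuousLinearEquiv ℝ (ContinuousLinearEquiv.neg ℝ)) φ))))
  rw [hkey, map_neg]
  ring

lemma revTD_add (T S : TD) : revTD (T + S) = revTD T + revTD S := by
  rw [revTD, revTD, revTD, ContinuousLinearMap.add_comp]

lemma revTD_smul (r : ℝ) (T : TD) : revTD (r • T) = r • revTD T := by
  rw [revTD, revTD, ContinuousLinearMap.smul_comp]

lemma revTD_neg (T : TD) : revTD (-T) = -(revTD T) := by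
  rw [revTD, revTD, ContinuousLinearMap.neg_comp]

set_option synthInstance.maxHeartbeats 400000 in
lemma Dop_pow_revTD (n : ℕ) (T : TD) : ((-Dop) ^ n) (revTD T) = revTD ((Dop ^ n) T) := by
  induction n with
  | zero => simp
  | succ n ih =>
    rw [pow_succ', pow_succ', Module.End.mul_apply, Module.End.mul_apply, ih,
      LinearMap.neg_apply, Dop_revTD, neg_neg]

lemma revTD_odo (p : Polynomial ℝ) (T : TD) :
    odo (p.comp (-Polynomial.X)) (revTD T) = revTD (odo p T) := by
  rw [odo, Polynomial.aeval_comp]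
  have hnegX : Polynomial.aeval Dop (-Polynomial.X : Polynomial ℝ) = -Dop := by
    rw [map_neg, Polynomial.aeval_X]
  rw [hnegX]
  induction p using Polynomial.induction_on' with
  | add p q hp hq =>
    rw [Polynomial.aeval_add, LinearMap.add_apply, hp, hq]
    show _ = revTD ((Polynomial.aeval Dop (p + q)) T)
    rw [Polynomial.aeval_add, LinearMap.add_apply, revTD_add]
    rfl
  | monomial n r =>
    rw [Polynomial.aeval_monomial, Module.End.mul_apply, Module.algebraMap_end_apply,
      Dop_pow_revTD]
    show _ = revTD ((Polynomial.aeval Dop (Polynomial.monomial n r)) T)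
    rw [Polynomial.aeval_monomial, Module.End.mul_apply, Module.algebraMap_end_apply,
      revTD_smul]

lemma revTD_dirac : revTD diracTD = diracTD := by
  ext φ
  show diracTD (SchwartzMap.compCLMOfContinuousLinearEquiv ℝ (ContinuousLinearEquiv.neg ℝ) φ)
    = diracTD φ
  rw [diracTD_apply, diracTD_apply,
    SchwartzMap.compCLMOfContinuousLinearEquiv_apply]
  simp

lemma revTD_zero : revTD (0 : TD) = 0 := by
  rw [revTD, ContinuousLinearMap.zero_comp]

lemma isAntiCausal_revTD (T : TD) (hT : IsCausalTD T) : IsAntiCausalTD (revTD T) := by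
  intro φ hs
  show T (SchwartzMap.compCLMOfContinuousLinearEquiv ℝ (ContinuousLinearEquiv.neg ℝ) φ) = 0
  refine hT _ ?_
  have hco : ⇑(SchwartzMap.compCLMOfContinuousLinearEquiv ℝ
      (ContinuousLinearEquiv.neg ℝ) φ) = ⇑φ ∘ fun y : ℝ => -y := by
    funext y
    rw [SchwartzMap.compCLMOfContinuousLinearEquiv_apply]
    simp
  rw [hco]
  have hsupp : Function.support (⇑φ ∘ fun y : ℝ => -y)
      = (fun y : ℝ => -y) ⁻¹' Function.support ⇑φ := Function.support_comp_eq_preimage _ _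
  have hcl : tsupport (⇑φ ∘ fun y : ℝ => -y)
      ⊆ (fun y : ℝ => -y) ⁻¹' tsupport ⇑φ := by
    rw [tsupport, hsupp]
    have : IsClosed ((fun y : ℝ => -y) ⁻¹' tsupport ⇑φ) :=
      (isClosed_tsupport _).preimage continuous_neg
    refine closure_minimal (Set.preimage_mono (subset_tsupport _)) this
  refine hcl.trans ?_
  intro x hx
  have := hs hx
  simp only [Set.mem_Ioi] at this
  simp only [Set.mem_Iio]
  linarith


end AGM

open AGM

/-- If `G_L` is the causal Green's matrix of an invertible MDO `L`, then its
time-reversed transpose `G_L^{⊤,∨}` is an anti-causal Green's matrix of the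
adjoint operator `L*`. -/
theorem adjoint_greens_matrix (D : ℕ) (L : Matrix (Fin D) (Fin D) (Polynomial ℝ))
    (hdet : L.det ≠ 0)
    (G : Matrix (Fin D) (Fin D) TD)
    (hcausal : ∀ r c, IsCausalTD (G r c))
    (hG : mdoMat L G = idDelta D) :
    mdoMat (mdoAdj L) (revTranspose G) = idDelta D ∧
    ∀ r c, IsAntiCausalTD (revTranspose G r c) := by
  have hGe : ∀ r c, ∑ d, odo (L r d) (G d c) = if r = c then diracTD else 0 := by
    intro r c
    exact congrFun (congrFun hG r) c
  have hkey := key_transpose L G hdet hcausal hGe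
  constructor
  · refine Matrix.ext fun r c => ?_
    show ∑ d, odo (mdoAdj L r d) (revTranspose G d c) = idDelta D r c
    have hentry : ∀ d, odo (mdoAdj L r d) (revTranspose G d c)
        = revTD (odo (L d r) (G c d)) := by
      intro d
      show odo ((L d r).comp (-Polynomial.X)) (revTD (G c d)) = _
      exact revTD_odo _ _
    rw [Finset.sum_congr rfl fun d _ => hentry d]
    have hsum : ∑ d, revTD (odo (L d r) (G c d)) = revTD (∑ d, odo (L d r) (G c d)) :=
      (map_sum (AddMonoidHom.mk' revTD revTD_add) (fun d => odo (L d r) (G c d))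
        Finset.univ).symm
    rw [hsum, hkey r c]
    show revTD (if c = r then diracTD else 0) = idDelta D r c
    by_cases hrc : r = c
    · subst hrc
      simp [revTD_dirac, idDelta]
    · have : ¬(c = r) := fun h => hrc h.symm
      simp only [this, if_false, revTD_zero, idDelta]
      simp [hrc, Matrix.of_apply]
  · intro r c
    exact isAntiCausal_revTD _ (hcausal c r)
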